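/- (Antipodality for planes.) Let Λ be a set of n nonvertical planes in ℝ³ in general position, let k be a nonnegative integer, let a, b ∈ Λ be distinct with intersection line l_{a,b} = a ∩ b, and let p be a point of l_{a,b} that does not lie on any plane of D = Λ \ {a,b}. Set D^k = {d ∈ D : C_{a,b,d} ∈ C^k}, h_up = {d ∈ D : d(p_x, p_y) > p_z} and h_down = {d ∈ D : d(p_x, p_y) < p_z} (the planes crossing the vertical line through p above, respectively below, p). Then | |h_up ∩ D^k| − |h_down ∩ D^k| | ≤ 2. -/

import Mathlib

open scoped Classical

noncomputable section

/-- A nonvertical plane in ℝ³, identified with the (affine) function `ℝ² → ℝ` whose graph it is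
(curried). -/
abbrev PP : Type := ℝ → ℝ → ℝ

/-- `a` is an affine function, i.e. its graph is a nonvertical plane. -/
def IsAffinePlane (a : PP) : Prop :=
  ∃ α β δ : ℝ, ∀ x y : ℝ, a x y = α * x + β * y + δ

/-- A set of nonvertical planes in general position:
the linear parts of any two are distinct (the difference is nonconstant, so any two planes
meet in a line), any three planes meet in exactly one point, and no four planes have a
common point. -/
def PlaneFamily (Λ : Finset PP) : Prop :=
  (∀ a ∈ Λ, IsAffinePlane a) ∧
  (∀ a ∈ Λ, ∀ b ∈ Λ, a ≠ b → ∃ x y x' y' : ℝ, a x y - b x y ≠ a x' y' - b x' y') ∧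
  (∀ a ∈ Λ, ∀ b ∈ Λ, ∀ c ∈ Λ, a ≠ b → a ≠ c → b ≠ c →
    ∃! q : ℝ × ℝ, a q.1 q.2 = b q.1 q.2 ∧ a q.1 q.2 = c q.1 q.2) ∧
  (∀ a ∈ Λ, ∀ b ∈ Λ, ∀ c ∈ Λ, ∀ d ∈ Λ, a ≠ b → a ≠ c → a ≠ d → b ≠ c → b ≠ d → c ≠ d →
    ¬ ∃ x y : ℝ, a x y = b x y ∧ a x y = c x y ∧ a x y = d x y)

/-- The level of the point `(x, y, z)`: the number of members of `Λ` passing strictly below it. -/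
def level (Λ : Finset PP) (x y z : ℝ) : ℕ :=
  (Λ.filter fun a => a x y < z).card

/-- The triple `s = {a,b,c}` spans a `k`-corridor: its common (triple intersection) point
is at level `k`. -/
def IsKCorridorTriple (Λ : Finset PP) (k : ℕ) (s : Finset PP) : Prop :=
  ∃ x y z : ℝ, (∀ a ∈ s, a x y = z) ∧ level Λ x y z = k

/-- The set `C^k` of `k`-corridors, encoded by the 3-element subsets of `Λ` spanning them. -/
def kCorridors (Λ : Finset PP) (k : ℕ) : Finset (Finset PP) :=
  (Λ.powersetCard 3).filter (IsKCorridorTriple Λ k)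

/-- The corridor of a triple `s`: the open region strictly between the lower and the upper
envelope of the three planes in `s`. Points of ℝ³ are `(x, (y, z))`. -/
def corridorSet (s : Finset PP) : Set (ℝ × ℝ × ℝ) :=
  {p | (∃ a ∈ s, a p.1 p.2.1 < p.2.2) ∧ (∃ a ∈ s, p.2.2 < a p.1 p.2.1)}

/-- The common intersection of the members of `s`. -/
def curveSet (s : Finset PP) : Set (ℝ × ℝ × ℝ) :=
  {p | ∀ a ∈ s, a p.1 p.2.1 = p.2.2}

/-- The corridor spanned by `s₁` is immersed in the corridor spanned by `s₂`: they share
exactly one plane, and the intersection line of the other two planes of `s₁` is fully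
contained in the corridor of `s₂`. -/
def Immersed (s₁ s₂ : Finset PP) : Prop :=
  (s₁ ∩ s₂).card = 1 ∧ curveSet (s₁ \ s₂) ⊆ corridorSet s₂

/-- `X^k`: the number of ordered pairs of `k`-corridors such that the first is immersed
in the second. -/
def numImmersedPairs (Λ : Finset PP) (k : ℕ) : ℕ :=
  ((kCorridors Λ k ×ˢ kCorridors Λ k).filter fun q => Immersed q.1 q.2).card


private def ap_chi (n k : ℕ) : ℤ := if k < n then 1 else 0

private def ap_lvl {ι : Type*} (t m : ι → ℝ) (I : Finset ι) (i : ι) : ℕ :=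
  (I.filter fun j => m j * (t i - t j) < 0).card

private lemma ap_card_filter_erase {ι : Type*} [DecidableEq ι] (I : Finset ι) (i : ι)
    (hi : i ∈ I) (P : ι → Prop) [DecidablePred P] :
    (I.filter P).card = ((I.erase i).filter P).card + if P i then 1 else 0 := by
  by_cases h : P i
  · rw [if_pos h, Finset.filter_erase]
    have hmem : i ∈ I.filter P := Finset.mem_filter.2 ⟨hi, h⟩
    have hpos : 0 < (I.filter P).card := Finset.card_pos.2 ⟨i, hmem⟩
    rw [Finset.card_erase_of_mem hmem]
    omega
  · rw [if_neg h, Finset.filter_erase,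
      Finset.erase_eq_of_notMem (fun hc => h (Finset.mem_filter.1 hc).2), add_zero]

private lemma ap_core {ι : Type*} [DecidableEq ι] (t m : ι → ℝ) :
    ∀ (I : Finset ι), (∀ i ∈ I, t i ≠ 0) → (∀ i ∈ I, m i ≠ 0) →
    (∀ i ∈ I, ∀ j ∈ I, t i = t j → i = j) → ∀ k : ℕ,
    ((I.filter fun i => 0 < t i ∧ ap_lvl t m I i = k ∧ m i < 0).card : ℤ)
      - ((I.filter fun i => 0 < t i ∧ ap_lvl t m I i = k ∧ 0 < m i).card : ℤ)
      = ap_chi ((I.filter fun j => m j < 0).card) k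
        - ap_chi ((I.filter fun j => (0 < t j ∧ 0 < m j) ∨ (t j < 0 ∧ m j < 0)).card) k := by
  intro I
  induction I using Finset.strongInduction with
  | _ I ih =>
    intro ht0 hm htinj k
    by_cases hpos : (I.filter fun i => 0 < t i).Nonempty
    · obtain ⟨i₀, hi₀f, hi₀max⟩ := Finset.exists_max_image _ t hpos
      obtain ⟨hi₀I, hti₀⟩ := Finset.mem_filter.1 hi₀f
      set I' := I.erase i₀ with hI'
      have hsub : I' ⊂ I := Finset.erase_ssubset hi₀I
      have hI'mem : ∀ j ∈ I', j ∈ I ∧ j ≠ i₀ := fun j hj =>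
        ⟨Finset.mem_of_mem_erase hj, Finset.ne_of_mem_erase hj⟩
      have hlt : ∀ j ∈ I', t j < t i₀ := by
        intro j hj
        obtain ⟨hjI, hjne⟩ := hI'mem j hj
        by_cases hjt : 0 < t j
        · have := hi₀max j (Finset.mem_filter.2 ⟨hjI, hjt⟩)
          rcases lt_or_eq_of_le this with h | h
          · exact h
          · exact absurd (htinj j hjI i₀ hi₀I h) hjne
        · have h1 := ht0 j hjI
          have : t j < 0 := lt_of_le_of_ne (not_lt.1 hjt) h1
          linarith
      set F := (I'.filter fun j => m j < 0).card with hF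
      -- lvl of i₀ in I equals # of negative slopes in I'
      have hlvl₀ : ap_lvl t m I i₀ = F := by
        unfold ap_lvl
        rw [ap_card_filter_erase I i₀ hi₀I, if_neg (by simp), add_zero]
        have he : (I'.filter fun j => m j * (t i₀ - t j) < 0)
            = I'.filter fun j => m j < 0 := by
          apply Finset.filter_congr
          intro j hj
          constructor
          · intro h
            rcases mul_neg_iff.1 h with ⟨_, h2⟩ | ⟨h1, _⟩
            · linarith [hlt j hj]
            · exact h1
          · intro h
            exact mul_neg_of_neg_of_pos h (by linarith [hlt j hj])
        rw [he]
      -- lvl relation for j ∈ I'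
      have hlvlrel : ∀ i ∈ I', ap_lvl t m I i
          = ap_lvl t m I' i + if m i₀ * (t i - t i₀) < 0 then 1 else 0 := by
        intro i hi
        unfold ap_lvl
        rw [ap_card_filter_erase I i₀ hi₀I]
      -- F0 relation
      have hF0 : (I.filter fun j => (0 < t j ∧ 0 < m j) ∨ (t j < 0 ∧ m j < 0)).card
          = (I'.filter fun j => (0 < t j ∧ 0 < m j) ∨ (t j < 0 ∧ m j < 0)).card
            + if 0 < m i₀ then 1 else 0 := by
        rw [ap_card_filter_erase I i₀ hi₀I]
        congr 1
        by_cases h : 0 < m i₀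
        · rw [if_pos h, if_pos (Or.inl ⟨hti₀, h⟩)]
        · rw [if_neg h, if_neg]
          rintro (⟨_, h2⟩ | ⟨h1, _⟩)
          · exact h h2
          · linarith
      have hFneg : (I.filter fun j => m j < 0).card
          = F + if m i₀ < 0 then 1 else 0 :=
        ap_card_filter_erase I i₀ hi₀I _
      have ht0' : ∀ i ∈ I', t i ≠ 0 := fun i hi => ht0 i (hI'mem i hi).1
      have hm' : ∀ i ∈ I', m i ≠ 0 := fun i hi => hm i (hI'mem i hi).1
      have htinj' : ∀ i ∈ I', ∀ j ∈ I', t i = t j → i = j := fun i hi j hj h =>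
        htinj i (hI'mem i hi).1 j (hI'mem j hj).1 h
      rcases (hm i₀ hi₀I).lt_or_gt with hmneg | hmpos
      · -- slope negative at the max
        have hlvleq : ∀ i ∈ I', ap_lvl t m I i = ap_lvl t m I' i := by
          intro i hi
          rw [hlvlrel i hi, if_neg, add_zero]
          intro h
          rcases mul_neg_iff.1 h with ⟨h1, _⟩ | ⟨_, h2⟩
          · linarith
          · linarith [hlt i hi]
        have hup : (I.filter fun i => 0 < t i ∧ ap_lvl t m I i = k ∧ m i < 0).card
            = (I'.filter fun i => 0 < t i ∧ ap_lvl t m I' i = k ∧ m i < 0).card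
              + if F = k then 1 else 0 := by
          rw [ap_card_filter_erase I i₀ hi₀I
            (fun i => 0 < t i ∧ ap_lvl t m I i = k ∧ m i < 0)]
          congr 1
          · refine congrArg Finset.card (Finset.filter_congr ?_)
            intro i hi
            rw [hlvleq i hi]
          · by_cases h : F = k
            · rw [if_pos h, if_pos ⟨hti₀, by rw [hlvl₀]; exact h, hmneg⟩]
            · rw [if_neg h, if_neg (fun hc => h (by rw [← hlvl₀]; exact hc.2.1))]
        have hdown : (I.filter fun i => 0 < t i ∧ ap_lvl t m I i = k ∧ 0 < m i).card
            = (I'.filter fun i => 0 < t i ∧ ap_lvl t m I' i = k ∧ 0 < m i).card := by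
          rw [ap_card_filter_erase I i₀ hi₀I
            (fun i => 0 < t i ∧ ap_lvl t m I i = k ∧ 0 < m i),
            if_neg (fun hc => absurd hc.2.2 (by linarith)), add_zero]
          refine congrArg Finset.card (Finset.filter_congr ?_)
          intro i hi
          rw [hlvleq i hi]
        have hih := ih I' hsub ht0' hm' htinj' k
        rw [← hF] at hih
        rw [hup, hdown, hFneg, hF0, if_pos hmneg,
          if_neg (show ¬ 0 < m i₀ from by linarith), add_zero]
        by_cases hFk : F = k
        · rw [if_pos hFk]
          unfold ap_chi at hih ⊢
          push_cast
          split_ifs at hih ⊢ <;> omega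
        · rw [if_neg hFk]
          unfold ap_chi at hih ⊢
          push_cast
          split_ifs at hih ⊢ <;> omega
      · -- slope positive at the max
        have hlvleq : ∀ i ∈ I', ap_lvl t m I i = ap_lvl t m I' i + 1 := by
          intro i hi
          rw [hlvlrel i hi, if_pos]
          exact mul_neg_of_pos_of_neg hmpos (by linarith [hlt i hi])
        rcases k with _ | n
        · -- k = 0
          have hup : (I.filter fun i => 0 < t i ∧ ap_lvl t m I i = 0 ∧ m i < 0).card = 0 := by
            rw [Finset.card_eq_zero, Finset.filter_eq_empty_iff]
            intro i hi hc
            by_cases h : i = i₀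
            · subst h; linarith [hc.2.2]
            · have hi' : i ∈ I' := Finset.mem_erase.2 ⟨h, hi⟩
              have := hlvleq i hi'
              omega
          have hdown : (I.filter fun i => 0 < t i ∧ ap_lvl t m I i = 0 ∧ 0 < m i).card
              = if F = 0 then 1 else 0 := by
            rw [ap_card_filter_erase I i₀ hi₀I
              (fun i => 0 < t i ∧ ap_lvl t m I i = 0 ∧ 0 < m i)]
            have he : (I'.filter fun i => 0 < t i ∧ ap_lvl t m I i = 0 ∧ 0 < m i) = ∅ := by
              rw [Finset.filter_eq_empty_iff]
              intro i hi hc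
              have := hlvleq i hi
              omega
            rw [he]
            simp only [Finset.card_empty, zero_add]
            by_cases h : F = 0
            · rw [if_pos h, if_pos ⟨hti₀, by rw [hlvl₀]; exact h, hmpos⟩]
            · rw [if_neg h, if_neg (fun hc => h (by rw [← hlvl₀]; exact hc.2.1))]
          rw [hup, hdown, hFneg, hF0, if_neg (show ¬ m i₀ < 0 from by linarith),
            if_pos hmpos, add_zero]
          by_cases hFk : F = 0
          · rw [if_pos hFk]
            unfold ap_chi
            split_ifs <;> omega
          · rw [if_neg hFk]
            unfold ap_chi
            split_ifs <;> omega
        · -- k = n + 1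
          have hup : (I.filter fun i => 0 < t i ∧ ap_lvl t m I i = n + 1 ∧ m i < 0).card
              = (I'.filter fun i => 0 < t i ∧ ap_lvl t m I' i = n ∧ m i < 0).card := by
            rw [ap_card_filter_erase I i₀ hi₀I
              (fun i => 0 < t i ∧ ap_lvl t m I i = n + 1 ∧ m i < 0),
              if_neg (fun hc => absurd hc.2.2 (by linarith)), add_zero]
            refine congrArg Finset.card (Finset.filter_congr ?_)
            intro i hi
            have := hlvleq i hi
            constructor
            · rintro ⟨h1, h2, h3⟩; exact ⟨h1, by omega, h3⟩
            · rintro ⟨h1, h2, h3⟩; exact ⟨h1, by omega, h3⟩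
          have hdown : (I.filter fun i => 0 < t i ∧ ap_lvl t m I i = n + 1 ∧ 0 < m i).card
              = (I'.filter fun i => 0 < t i ∧ ap_lvl t m I' i = n ∧ 0 < m i).card
                + if F = n + 1 then 1 else 0 := by
            rw [ap_card_filter_erase I i₀ hi₀I
              (fun i => 0 < t i ∧ ap_lvl t m I i = n + 1 ∧ 0 < m i)]
            congr 1
            · refine congrArg Finset.card (Finset.filter_congr ?_)
              intro i hi
              have := hlvleq i hi
              constructor
              · rintro ⟨h1, h2, h3⟩; exact ⟨h1, by omega, h3⟩
              · rintro ⟨h1, h2, h3⟩; exact ⟨h1, by omega, h3⟩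
            · by_cases h : F = n + 1
              · rw [if_pos h, if_pos ⟨hti₀, by rw [hlvl₀]; exact h, hmpos⟩]
              · rw [if_neg h, if_neg (fun hc => h (by rw [← hlvl₀]; exact hc.2.1))]
          have hih := ih I' hsub ht0' hm' htinj' n
          rw [← hF] at hih
          rw [hup, hdown, hFneg, hF0, if_neg (show ¬ m i₀ < 0 from by linarith),
            if_pos hmpos, add_zero]
          by_cases hFk : F = n + 1
          · rw [if_pos hFk]
            unfold ap_chi at hih ⊢
            push_cast
            split_ifs at hih ⊢ <;> omega
          · rw [if_neg hFk]
            unfold ap_chi at hih ⊢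
            push_cast
            split_ifs at hih ⊢ <;> omega
    · -- base case : no positive t
      have hne : ∀ i ∈ I, ¬ 0 < t i := by
        intro i hi h
        exact hpos ⟨i, Finset.mem_filter.2 ⟨hi, h⟩⟩
      have h1 : (I.filter fun i => 0 < t i ∧ ap_lvl t m I i = k ∧ m i < 0) = ∅ :=
        Finset.filter_eq_empty_iff.2 (fun {i} hi hc => hne i hi hc.1)
      have h2 : (I.filter fun i => 0 < t i ∧ ap_lvl t m I i = k ∧ 0 < m i) = ∅ :=
        Finset.filter_eq_empty_iff.2 (fun {i} hi hc => hne i hi hc.1)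
      have h3 : (I.filter fun j => (0 < t j ∧ 0 < m j) ∨ (t j < 0 ∧ m j < 0))
          = I.filter fun j => m j < 0 := by
        apply Finset.filter_congr
        intro j hj
        have hjt : t j < 0 := lt_of_le_of_ne (not_lt.1 (hne j hj)) (ht0 j hj)
        constructor
        · rintro (⟨ha, _⟩ | ⟨_, hb⟩)
          · exact absurd ha (hne j hj)
          · exact hb
        · intro h; exact Or.inr ⟨hjt, h⟩
      rw [h1, h2, h3]
      simp

/-- Antipodality for planes: Let `Λ` be a set of `n` nonvertical planes in ℝ³
in general position, `k` a nonnegative integer, `a ≠ b` in `Λ` with intersection line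
`l_{a,b}`, and `p = (px,py,pz)` a point of `l_{a,b}` not lying on any plane of
`D = Λ \ {a,b}`. With `D^k = {d ∈ D : C_{a,b,d} ∈ C^k}`, `h_up` (resp. `h_down`) the planes
crossing the vertical line through `p` above (resp. below) `p`, we have
`| |h_up ∩ D^k| − |h_down ∩ D^k| | ≤ 2`. -/
theorem statement12 (Λ : Finset PP) (k : ℕ) (hΛ : PlaneFamily Λ)
    (a b : PP) (ha : a ∈ Λ) (hb : b ∈ Λ) (hab : a ≠ b)
    (px py pz : ℝ) (hpa : a px py = pz) (hpb : b px py = pz)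
    (hgen : ∀ d ∈ Λ \ {a, b}, d px py ≠ pz) :
    |((((Λ \ {a, b}).filter fun d =>
          pz < d px py ∧ IsKCorridorTriple Λ k {a, b, d}).card : ℤ) -
      (((Λ \ {a, b}).filter fun d =>
          d px py < pz ∧ IsKCorridorTriple Λ k {a, b, d}).card : ℤ))| ≤ 2 := by
  obtain ⟨haff, hpair, htriple, hquad⟩ := hΛ
  obtain ⟨A1, A2, A3, hA⟩ := haff a ha
  obtain ⟨B1, B2, B3, hB⟩ := haff b hb
  have hpa' : A1 * px + A2 * py + A3 = pz := by rw [← hA]; exact hpa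
  have hpb' : B1 * px + B2 * py + B3 = pz := by rw [← hB]; exact hpb
  have hu : A1 - B1 ≠ 0 ∨ A2 - B2 ≠ 0 := by
    by_contra h
    push_neg at h
    obtain ⟨x, y, x', y', hxy⟩ := hpair a ha b hb hab
    apply hxy
    rw [hA, hA, hB, hB]
    linear_combination (x - x') * h.1 + (y - y') * h.2
  have hN : (0:ℝ) < (A1 - B1) ^ 2 + (A2 - B2) ^ 2 := by
    rcases hu with h | h <;> positivity
  obtain ⟨X, hX⟩ : ∃ X : ℝ → ℝ, X = fun s => px + s * (-(A2 - B2)) := ⟨_, rfl⟩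
  obtain ⟨Y, hY⟩ : ∃ Y : ℝ → ℝ, Y = fun s => py + s * (A1 - B1) := ⟨_, rfl⟩
  obtain ⟨Z, hZ⟩ : ∃ Z : ℝ → ℝ, Z = fun s => a (X s) (Y s) := ⟨_, rfl⟩
  obtain ⟨g, hgdef⟩ : ∃ g : PP → ℝ → ℝ, g = fun d s => d (X s) (Y s) - Z s := ⟨_, rfl⟩
  obtain ⟨mm, hmm⟩ : ∃ mm : PP → ℝ, mm = fun d => g d 1 - g d 0 := ⟨_, rfl⟩
  obtain ⟨tt, htt⟩ : ∃ tt : PP → ℝ, tt = fun d => -(g d 0) / mm d := ⟨_, rfl⟩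
  -- affinity of g
  have hg : ∀ d ∈ Λ, ∀ s : ℝ, g d s = g d 0 + s * mm d := by
    intro d hd s
    obtain ⟨D1, D2, D3, hD⟩ := haff d hd
    simp only [hgdef, hmm, hZ, hX, hY, hD, hA]
    ring
  -- b coincides with a along the line
  have hgb : ∀ s : ℝ, b (X s) (Y s) = Z s := by
    intro s
    simp only [hZ, hX, hY, hA, hB]
    linear_combination hpb' - hpa'
  have hX0 : X 0 = px := by simp [hX]
  have hY0 : Y 0 = py := by simp [hY]
  have hZ0 : Z 0 = pz := by simp only [hZ, hX0, hY0]; exact hpa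
  have hDmem : ∀ d ∈ Λ \ ({a, b} : Finset PP), d ∈ Λ ∧ d ≠ a ∧ d ≠ b := by
    intro d hd
    rw [Finset.mem_sdiff, Finset.mem_insert, Finset.mem_singleton] at hd
    exact ⟨hd.1, fun h => hd.2 (Or.inl h), fun h => hd.2 (Or.inr h)⟩
  have hg0 : ∀ d ∈ Λ \ ({a, b} : Finset PP), g d 0 ≠ 0 := by
    intro d hd
    have h : g d 0 = d px py - pz := by simp only [hgdef, hX0, hY0, hZ0]
    rw [h, sub_ne_zero]
    exact hgen d hd
  -- surjectivity of the parametrization onto the line a = b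
  have hsur : ∀ x y : ℝ, a x y = b x y → ∃ s : ℝ, X s = x ∧ Y s = y := by
    intro x y hxy
    have hxy' : A1 * x + A2 * y + A3 = B1 * x + B2 * y + B3 := by
      rw [← hA, ← hB]; exact hxy
    have h0 : (A1 - B1) * (x - px) + (A2 - B2) * (y - py) = 0 := by
      linear_combination hxy' - hpa' + hpb'
    refine ⟨((A1 - B1) * (y - py) - (A2 - B2) * (x - px)) / ((A1 - B1) ^ 2 + (A2 - B2) ^ 2),
      ?_, ?_⟩
    · simp only [hX]
      field_simp
      linear_combination (-(A1 - B1)) * h0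
    · simp only [hY]
      field_simp
      linear_combination (-(A2 - B2)) * h0
  -- nonzero slopes
  have hmne : ∀ d ∈ Λ \ ({a, b} : Finset PP), mm d ≠ 0 := by
    intro d hd hzero
    obtain ⟨hdΛ, hda, hdb⟩ := hDmem d hd
    obtain ⟨q, ⟨hq1, hq2⟩, -⟩ :=
      htriple a ha b hb d hdΛ hab (fun h => hda h.symm) (fun h => hdb h.symm)
    obtain ⟨s, hsx, hsy⟩ := hsur q.1 q.2 hq1
    have hgs : g d s = 0 := by
      simp only [hgdef, hZ, hsx, hsy]
      rw [← hq2]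
      ring
    rw [hg d hdΛ s, hzero, mul_zero, add_zero] at hgs
    exact hg0 d hd hgs
  have hroot : ∀ d ∈ Λ \ ({a, b} : Finset PP), g d (tt d) = 0 := by
    intro d hd
    rw [hg d (hDmem d hd).1, htt]
    field_simp [hmne d hd]
    ring
  have httne : ∀ d ∈ Λ \ ({a, b} : Finset PP), tt d ≠ 0 := by
    intro d hd
    rw [htt]
    exact div_ne_zero (neg_ne_zero.2 (hg0 d hd)) (hmne d hd)
  -- the fundamental factorization
  have hgfact : ∀ d ∈ Λ \ ({a, b} : Finset PP), ∀ s : ℝ,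
      d (X s) (Y s) - Z s = mm d * (s - tt d) := by
    intro d hd s
    have h1 := hg d (hDmem d hd).1 s
    have h2 := hroot d hd
    rw [hg d (hDmem d hd).1 (tt d)] at h2
    have h3 : d (X s) (Y s) - Z s = g d s := by rw [hgdef]
    rw [h3, h1]
    linear_combination h2
  -- injectivity of tt
  have httinj : ∀ d ∈ Λ \ ({a, b} : Finset PP), ∀ e ∈ Λ \ ({a, b} : Finset PP),
      tt d = tt e → d = e := by
    intro d hd e he hde
    by_contra hne
    obtain ⟨hdΛ, hda, hdb⟩ := hDmem d hd
    obtain ⟨heΛ, hea, heb⟩ := hDmem e he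
    apply hquad a ha b hb d hdΛ e heΛ hab (fun h => hda h.symm) (fun h => hea h.symm)
      (fun h => hdb h.symm) (fun h => heb h.symm) hne
    have haZ : a (X (tt d)) (Y (tt d)) = Z (tt d) := by simp only [hZ]
    refine ⟨X (tt d), Y (tt d), ?_, ?_, ?_⟩
    · rw [haZ]; exact (hgb (tt d)).symm
    · have h := hgfact d hd (tt d)
      rw [sub_self, mul_zero, sub_eq_zero] at h
      rw [haZ]; exact h.symm
    · have h := hgfact e he (tt e)
      rw [sub_self, mul_zero, sub_eq_zero] at h
      rw [haZ, hde]
      exact h.symm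
  -- level along the line
  have hlevel : ∀ s : ℝ, level Λ (X s) (Y s) (Z s)
      = ((Λ \ ({a, b} : Finset PP)).filter fun c => mm c * (s - tt c) < 0).card := by
    intro s
    unfold level
    congr 1
    ext c
    simp only [Finset.mem_filter, Finset.mem_sdiff, Finset.mem_insert, Finset.mem_singleton]
    constructor
    · rintro ⟨hcΛ, hlt⟩
      have hca : c ≠ a := by
        rintro rfl
        simp only [hZ] at hlt
        exact lt_irrefl _ hlt
      have hcb : c ≠ b := by
        rintro rfl
        rw [hgb s] at hlt
        exact lt_irrefl _ hlt
      have hcD : c ∈ Λ \ ({a, b} : Finset PP) := by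
        rw [Finset.mem_sdiff, Finset.mem_insert, Finset.mem_singleton]
        exact ⟨hcΛ, fun h => h.elim hca hcb⟩
      have hf := hgfact c hcD s
      refine ⟨⟨hcΛ, fun h => h.elim hca hcb⟩, by linarith⟩
    · rintro ⟨⟨hcΛ, hcab⟩, hlt⟩
      have hcD : c ∈ Λ \ ({a, b} : Finset PP) := by
        rw [Finset.mem_sdiff, Finset.mem_insert, Finset.mem_singleton]
        exact ⟨hcΛ, hcab⟩
      have hf := hgfact c hcD s
      exact ⟨hcΛ, by linarith⟩
  -- corridor characterization
  have hcorr : ∀ d ∈ Λ \ ({a, b} : Finset PP),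
      (IsKCorridorTriple Λ k {a, b, d} ↔ ap_lvl tt mm (Λ \ ({a, b} : Finset PP)) d = k) := by
    intro d hd
    have hlvld : ap_lvl tt mm (Λ \ ({a, b} : Finset PP)) d
        = ((Λ \ ({a, b} : Finset PP)).filter fun c => mm c * (tt d - tt c) < 0).card := rfl
    constructor
    · rintro ⟨x, y, z, hall, hlev⟩
      have hax : a x y = z := hall a (by simp)
      have hbx : b x y = z := hall b (by simp)
      have hdx : d x y = z := hall d (by simp)
      obtain ⟨s, hsx, hsy⟩ := hsur x y (by rw [hax, hbx])
      have hz : Z s = z := by simp only [hZ, hsx, hsy]; exact hax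
      have h0 : mm d * (s - tt d) = 0 := by
        rw [← hgfact d hd s, hsx, hsy, hz, hdx, sub_self]
      have hs : s = tt d := by
        rcases mul_eq_zero.1 h0 with h | h
        · exact absurd h (hmne d hd)
        · linarith [sub_eq_zero.1 h]
      rw [← hsx, ← hsy, ← hz] at hlev
      rw [hlevel s, hs] at hlev
      rw [hlvld]
      exact hlev
    · intro h
      refine ⟨X (tt d), Y (tt d), Z (tt d), ?_, by rw [hlevel, ← hlvld]; exact h⟩
      intro c hc
      rcases Finset.mem_insert.1 hc with rfl | hc
      · simp only [hZ]
      rcases Finset.mem_insert.1 hc with rfl | hc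
      · exact hgb _
      rw [Finset.mem_singleton.1 hc]
      have hr := hgfact d hd (tt d)
      rw [sub_self, mul_zero, sub_eq_zero] at hr
      exact hr
  -- translation of up/down conditions
  have hsign : ∀ d ∈ Λ \ ({a, b} : Finset PP),
      (pz < d px py ↔ mm d * tt d < 0) ∧ (d px py < pz ↔ 0 < mm d * tt d) := by
    intro d hd
    have hf := hgfact d hd 0
    rw [hX0, hY0, hZ0] at hf
    have hr : mm d * (0 - tt d) = -(mm d * tt d) := by ring
    rw [hr] at hf
    constructor
    · constructor <;> intro h <;> linarith
    · constructor <;> intro h <;> linarith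
  -- the two filter decompositions
  have hdis1 : Disjoint
      ((Λ \ ({a, b} : Finset PP)).filter fun d =>
        0 < tt d ∧ ap_lvl tt mm (Λ \ ({a, b} : Finset PP)) d = k ∧ mm d < 0)
      ((Λ \ ({a, b} : Finset PP)).filter fun d =>
        tt d < 0 ∧ ap_lvl tt mm (Λ \ ({a, b} : Finset PP)) d = k ∧ 0 < mm d) := by
    refine Finset.disjoint_left.2 fun x hx1 hx2 => ?_
    rw [Finset.mem_filter] at hx1 hx2
    linarith [hx1.2.1, hx2.2.1]
  have hdis2 : Disjoint
      ((Λ \ ({a, b} : Finset PP)).filter fun d =>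
        0 < tt d ∧ ap_lvl tt mm (Λ \ ({a, b} : Finset PP)) d = k ∧ 0 < mm d)
      ((Λ \ ({a, b} : Finset PP)).filter fun d =>
        tt d < 0 ∧ ap_lvl tt mm (Λ \ ({a, b} : Finset PP)) d = k ∧ mm d < 0) := by
    refine Finset.disjoint_left.2 fun x hx1 hx2 => ?_
    rw [Finset.mem_filter] at hx1 hx2
    linarith [hx1.2.1, hx2.2.1]
  have hupfilter : ((Λ \ ({a, b} : Finset PP)).filter fun d =>
        pz < d px py ∧ IsKCorridorTriple Λ k {a, b, d})
      = ((Λ \ ({a, b} : Finset PP)).filter fun d =>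
          0 < tt d ∧ ap_lvl tt mm (Λ \ ({a, b} : Finset PP)) d = k ∧ mm d < 0)
        ∪ ((Λ \ ({a, b} : Finset PP)).filter fun d =>
          tt d < 0 ∧ ap_lvl tt mm (Λ \ ({a, b} : Finset PP)) d = k ∧ 0 < mm d) := by
    rw [← Finset.filter_or]
    refine Finset.filter_congr fun d hd => ?_
    rw [(hsign d hd).1, hcorr d hd]
    have hmd := hmne d hd
    have htd := httne d hd
    constructor
    · rintro ⟨hc, hk⟩
      rcases mul_neg_iff.1 hc with ⟨hm1, ht1⟩ | ⟨hm1, ht1⟩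
      · exact Or.inr ⟨ht1, hk, hm1⟩
      · exact Or.inl ⟨ht1, hk, hm1⟩
    · rintro (⟨h1', h2', h3'⟩ | ⟨h1', h2', h3'⟩)
      · exact ⟨mul_neg_of_neg_of_pos h3' h1', h2'⟩
      · exact ⟨mul_neg_of_pos_of_neg h3' h1', h2'⟩
  have hdownfilter : ((Λ \ ({a, b} : Finset PP)).filter fun d =>
        d px py < pz ∧ IsKCorridorTriple Λ k {a, b, d})
      = ((Λ \ ({a, b} : Finset PP)).filter fun d =>
          0 < tt d ∧ ap_lvl tt mm (Λ \ ({a, b} : Finset PP)) d = k ∧ 0 < mm d)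
        ∪ ((Λ \ ({a, b} : Finset PP)).filter fun d =>
          tt d < 0 ∧ ap_lvl tt mm (Λ \ ({a, b} : Finset PP)) d = k ∧ mm d < 0) := by
    rw [← Finset.filter_or]
    refine Finset.filter_congr fun d hd => ?_
    rw [(hsign d hd).2, hcorr d hd]
    have hmd := hmne d hd
    have htd := httne d hd
    constructor
    · rintro ⟨hc, hk⟩
      rcases mul_pos_iff.1 hc with ⟨hm1, ht1⟩ | ⟨hm1, ht1⟩
      · exact Or.inl ⟨ht1, hk, hm1⟩
      · exact Or.inr ⟨ht1, hk, hm1⟩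
    · rintro (⟨h1', h2', h3'⟩ | ⟨h1', h2', h3'⟩)
      · exact ⟨mul_pos h3' h1', h2'⟩
      · exact ⟨mul_pos_of_neg_of_neg h3' h1', h2'⟩
  -- core lemma applications
  have hR := ap_core tt mm (Λ \ ({a, b} : Finset PP)) httne hmne httinj k
  have hL := ap_core (fun e => -tt e) (fun e => -mm e) (Λ \ ({a, b} : Finset PP))
      (fun d hd => neg_ne_zero.2 (httne d hd)) (fun d hd => neg_ne_zero.2 (hmne d hd))
      (fun d hd e he h => httinj d hd e he (neg_inj.1 h)) k
  beta_reduce at hL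
  have hlvlneg : ∀ d, ap_lvl (fun e => -tt e) (fun e => -mm e) (Λ \ ({a, b} : Finset PP)) d
      = ap_lvl tt mm (Λ \ ({a, b} : Finset PP)) d := by
    intro d
    unfold ap_lvl
    refine congrArg Finset.card (Finset.filter_congr fun j _ => ?_)
    refine iff_of_eq (congrArg (fun r : ℝ => r < 0) ?_)
    ring
  have e3 : ((Λ \ ({a, b} : Finset PP)).filter fun i =>
        0 < -tt i ∧ ap_lvl (fun e => -tt e) (fun e => -mm e) (Λ \ ({a, b} : Finset PP)) i = k
          ∧ -mm i < 0)
      = ((Λ \ ({a, b} : Finset PP)).filter fun d =>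
          tt d < 0 ∧ ap_lvl tt mm (Λ \ ({a, b} : Finset PP)) d = k ∧ 0 < mm d) := by
    refine Finset.filter_congr fun d _ => ?_
    rw [hlvlneg d]
    constructor <;> rintro ⟨h1, h2, h3⟩ <;> exact ⟨by linarith, h2, by linarith⟩
  have e4 : ((Λ \ ({a, b} : Finset PP)).filter fun i =>
        0 < -tt i ∧ ap_lvl (fun e => -tt e) (fun e => -mm e) (Λ \ ({a, b} : Finset PP)) i = k
          ∧ 0 < -mm i)
      = ((Λ \ ({a, b} : Finset PP)).filter fun d =>
          tt d < 0 ∧ ap_lvl tt mm (Λ \ ({a, b} : Finset PP)) d = k ∧ mm d < 0) := by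
    refine Finset.filter_congr fun d _ => ?_
    rw [hlvlneg d]
    constructor <;> rintro ⟨h1, h2, h3⟩ <;> exact ⟨by linarith, h2, by linarith⟩
  rw [e3, e4] at hL
  rw [hupfilter, hdownfilter, Finset.card_union_of_disjoint hdis1,
    Finset.card_union_of_disjoint hdis2]
  push_cast
  rw [abs_le]
  unfold ap_chi at hR hL
  split_ifs at hR hL <;> constructor <;> omega
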